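/- If G is an Eulerian multigraph that admits an interval coloring, then for every edge e of G, the multigraph G_e obtained from G by subdividing the edge e admits no interval coloring. -/

import Mathlib

open scoped Classical

structure Multigraph (V E : Type) where
  ends : E → Sym2 V
  not_isDiag : ∀ e, ¬ (ends e).IsDiag

namespace Multigraph

variable {V E : Type}

noncomputable def degree [Fintype E] (G : Multigraph V E) (v : V) : ℕ :=
  (Finset.univ.filter (fun e => v ∈ G.ends e)).card

def Proper (G : Multigraph V E) (c : E → ℕ) : Prop :=
  ∀ e f, e ≠ f → ∀ v, v ∈ G.ends e → v ∈ G.ends f → c e ≠ c f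

noncomputable def colorSet [Fintype E] (G : Multigraph V E) (c : E → ℕ) (v : V) : Finset ℕ :=
  (Finset.univ.filter (fun e => v ∈ G.ends e)).image c

def IsIntervalColoring [Fintype E] (G : Multigraph V E) (c : E → ℕ) (t : ℕ) : Prop :=
  G.Proper c ∧ (∀ e, c e ∈ Finset.Icc 1 t) ∧ (∀ i ∈ Finset.Icc 1 t, ∃ e, c e = i) ∧
    ∀ v : V, ∃ a b : ℕ, G.colorSet c v = Finset.Icc a b

def IntervalColorable [Fintype E] (G : Multigraph V E) : Prop :=
  ∃ t c, G.IsIntervalColoring c t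

def Adj (G : Multigraph V E) (v w : V) : Prop := ∃ e, G.ends e = s(v, w)

def Connected (G : Multigraph V E) : Prop :=
  Nonempty V ∧ ∀ v w : V, Relation.ReflTransGen G.Adj v w

noncomputable def maxDegree [Fintype V] [Fintype E] (G : Multigraph V E) : ℕ :=
  Finset.univ.sup G.degree

noncomputable def chromIndex [Fintype E] (G : Multigraph V E) : ℕ :=
  sInf {n | ∃ c : E → ℕ, G.Proper c ∧ ∀ e, c e ∈ Finset.Icc 1 n}

end Multigraph

namespace Multigraph

variable {V E : Type}

/-- The multigraph obtained by subdividing the edge `e` (with endpoints `x` and `y`). -/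
def subdivide (G : Multigraph V E) (e : E) (x y : V) :
    Multigraph (V ⊕ Unit) ({f : E // f ≠ e} ⊕ Bool) where
  ends := fun f => match f with
    | Sum.inl f => (G.ends f.1).map Sum.inl
    | Sum.inr true => s(Sum.inl x, Sum.inr ())
    | Sum.inr false => s(Sum.inl y, Sum.inr ())
  not_isDiag := by
    rintro (⟨f, hf⟩ | b)
    · exact fun h => G.not_isDiag f ((Sym2.isDiag_map Sum.inl_injective).mp h)
    · cases b <;> simp

/-- The multigraph `G*`: a new vertex joined to every vertex of odd degree. -/
def addOddVertex [Fintype E] (G : Multigraph V E) :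
    Multigraph (V ⊕ Unit) (E ⊕ {v : V // Odd (G.degree v)}) where
  ends := fun f => match f with
    | Sum.inl e => (G.ends e).map Sum.inl
    | Sum.inr v => s(Sum.inl v.1, Sum.inr ())
  not_isDiag := by
    rintro (e | v)
    · exact fun h => G.not_isDiag e ((Sym2.isDiag_map Sum.inl_injective).mp h)
    · simp

/-- The edge "names" of the line graph of `G`. -/
def LineEdges (G : Multigraph V E) : Type :=
  {p : Sym2 E // ¬p.IsDiag ∧ ∃ v : V, ∀ f, f ∈ p → v ∈ G.ends f}

noncomputable instance [Finite E] (G : Multigraph V E) : Fintype G.LineEdges := by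
  unfold Multigraph.LineEdges; exact Fintype.ofFinite _

/-- The line graph of `G`, as a multigraph on vertex set `E`. -/
def lineGraph (G : Multigraph V E) : Multigraph E G.LineEdges where
  ends := fun p => p.1
  not_isDiag := fun p => p.2.1

end Multigraph

namespace IntervalAux

open Finset

lemma range_filter_odd_card (n : ℕ) : ((Finset.range n).filter Odd).card = n / 2 := by
  induction n with
  | zero => simp
  | succ n ih =>
    rw [Finset.range_add_one, Finset.filter_insert]
    by_cases h : Odd n
    · rw [if_pos h, Finset.card_insert_of_notMem (by simp), ih]
      obtain ⟨k, hk⟩ := h; omega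
    · rw [if_neg h, ih]
      obtain ⟨k, hk⟩ := Nat.not_odd_iff_even.mp h; omega

lemma Icc_filter_odd_card {a b : ℕ} (h : Even (Finset.Icc a b).card) :
    ((Finset.Icc a b).filter Odd).card * 2 = (Finset.Icc a b).card := by
  by_cases hab : a ≤ b
  · have hunion := Finset.Ico_union_Ico_eq_Ico (Nat.zero_le a) (show a ≤ b + 1 by omega)
    have hdisj : Disjoint (Finset.Ico 0 a) (Finset.Ico a (b + 1)) :=
      Finset.Ico_disjoint_Ico_consecutive 0 a (b + 1)
    have hcardsum : ((Finset.Ico 0 (b+1)).filter Odd).card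
        = ((Finset.Ico 0 a).filter Odd).card + ((Finset.Ico a (b+1)).filter Odd).card := by
      rw [← hunion, Finset.filter_union,
        Finset.card_union_of_disjoint (Finset.disjoint_filter_filter hdisj)]
    rw [show Finset.Ico 0 (b+1) = Finset.range (b+1) by
          rw [Finset.range_eq_Ico],
        show Finset.Ico 0 a = Finset.range a by rw [Finset.range_eq_Ico],
        range_filter_odd_card, range_filter_odd_card,
        Finset.Ico_add_one_right_eq_Icc] at hcardsum
    have hcard : (Finset.Icc a b).card = b + 1 - a := Nat.card_Icc a b
    obtain ⟨m, hm⟩ := h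
    omega
  · rw [Finset.Icc_eq_empty (by omega)]; simp

end IntervalAux

namespace Multigraph

open Finset

variable {V E : Type}

/-- The finite set of vertices that are endpoints of some edge. -/
noncomputable def vsupp [Fintype E] (G : Multigraph V E) : Finset V :=
  Finset.univ.biUnion fun e => {(G.ends e).out.1, (G.ends e).out.2}

lemma ends_eq_out (G : Multigraph V E) (e : E) :
    G.ends e = s((G.ends e).out.1, (G.ends e).out.2) := by
  conv_lhs => rw [← (G.ends e).out_eq]

lemma mem_vsupp [Fintype E] {G : Multigraph V E} {v : V} {e : E}
    (h : v ∈ G.ends e) : v ∈ G.vsupp := by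
  rw [G.ends_eq_out e, Sym2.mem_iff] at h
  exact Finset.mem_biUnion.mpr ⟨e, Finset.mem_univ e, by
    rcases h with rfl | rfl <;> simp⟩

/-- Double counting: summing over all (relevant) vertices the number of incident
edges in `T` gives twice `T.card`. -/
lemma double_count [Fintype E] (G : Multigraph V E) (T : Finset E) :
    ∑ v ∈ G.vsupp, (T.filter fun e => v ∈ G.ends e).card = 2 * T.card := by
  have key : ∀ e ∈ T, (G.vsupp.filter fun v => v ∈ G.ends e).card = 2 := by
    intro e _
    have hne : (G.ends e).out.1 ≠ (G.ends e).out.2 := by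
      intro hcontra
      apply G.not_isDiag e
      rw [G.ends_eq_out e, hcontra]
      exact Sym2.mk_isDiag_iff.mpr rfl
    have : (G.vsupp.filter fun v => v ∈ G.ends e)
        = {(G.ends e).out.1, (G.ends e).out.2} := by
      ext v
      simp only [Finset.mem_filter, Finset.mem_insert, Finset.mem_singleton]
      constructor
      · rintro ⟨-, hv⟩
        rwa [G.ends_eq_out e, Sym2.mem_iff] at hv
      · rintro (rfl | rfl)
        · exact ⟨mem_vsupp (Sym2.out_fst_mem _), Sym2.out_fst_mem _⟩
        · exact ⟨mem_vsupp (Sym2.out_snd_mem _), Sym2.out_snd_mem _⟩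
    rw [this, Finset.card_insert_of_notMem (by simpa using hne), Finset.card_singleton]
  calc ∑ v ∈ G.vsupp, (T.filter fun e => v ∈ G.ends e).card
      = ∑ v ∈ G.vsupp, ∑ e ∈ T, if v ∈ G.ends e then 1 else 0 := by
        refine Finset.sum_congr rfl fun v _ => ?_
        rw [Finset.card_filter]
    _ = ∑ e ∈ T, ∑ v ∈ G.vsupp, if v ∈ G.ends e then 1 else 0 := Finset.sum_comm
    _ = ∑ e ∈ T, (2 : ℕ) := by
        refine Finset.sum_congr rfl fun e he => ?_
        rw [← Finset.card_filter]
        exact key e he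
    _ = 2 * T.card := by rw [Finset.sum_const, smul_eq_mul, Nat.mul_comm]

/-- Per-vertex: in an interval coloring of a graph with even degree at `v`, exactly
half the edges at `v` get an odd color. -/
lemma odd_half [Fintype E] {G : Multigraph V E} {c : E → ℕ} {t : ℕ}
    (hc : G.IsIntervalColoring c t) (v : V) (hv : Even (G.degree v)) :
    ((Finset.univ.filter fun e => v ∈ G.ends e).filter fun e => Odd (c e)).card * 2
      = G.degree v := by
  obtain ⟨hproper, -, -, hint⟩ := hc
  set I : Finset E := Finset.univ.filter fun e => v ∈ G.ends e with hI
  have hinj : Set.InjOn c ↑I := by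
    intro a ha b hb hab
    by_contra hne
    exact hproper a b hne v (by simpa [hI] using ha) (by simpa [hI] using hb) hab
  obtain ⟨a, b, hab⟩ := hint v
  have hcolorSet : I.image c = Finset.Icc a b := by
    rw [← hab]; rfl
  have hdeg : (Finset.Icc a b).card = G.degree v := by
    rw [← hcolorSet, Finset.card_image_of_injOn hinj]; rfl
  have himg : (I.filter fun e => Odd (c e)).image c = (Finset.Icc a b).filter Odd := by
    rw [← hcolorSet, Finset.filter_image]
  have hcard : (I.filter fun e => Odd (c e)).card = ((Finset.Icc a b).filter Odd).card := by
    rw [← himg, Finset.card_image_of_injOn (hinj.mono (by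
      intro z hz; exact Finset.mem_coe.mpr (Finset.mem_of_mem_filter z (Finset.mem_coe.mp hz))))]
  rw [hcard, IntervalAux.Icc_filter_odd_card (hdeg ▸ hv), hdeg]

/-- Parity theorem: an interval-colorable multigraph with all degrees even has an
even number of edges. -/
theorem even_card_of_intervalColorable [Fintype E] (G : Multigraph V E)
    (heven : ∀ v : V, Even (G.degree v)) (hcol : G.IntervalColorable) :
    Even (Fintype.card E) := by
  obtain ⟨t, c, hc⟩ := hcol
  have h1 := G.double_count Finset.univ
  have h2 := G.double_count (Finset.univ.filter fun e => Odd (c e))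
  have h3 : ∑ v ∈ G.vsupp, (Finset.univ.filter fun e => v ∈ G.ends e).card
      = ∑ v ∈ G.vsupp,
        ((Finset.univ.filter fun e => v ∈ G.ends e).filter fun e => Odd (c e)).card * 2 := by
    refine Finset.sum_congr rfl fun v _ => ?_
    rw [odd_half hc v (heven v)]
    rfl
  have h4 : ∀ v : V, ((Finset.univ.filter fun e => Odd (c e)).filter fun e => v ∈ G.ends e)
      = ((Finset.univ.filter fun e => v ∈ G.ends e).filter fun e => Odd (c e)) := by
    intro v
    rw [Finset.filter_filter, Finset.filter_filter]
    exact Finset.filter_congr fun e _ => by tauto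
  simp_rw [h4] at h2
  rw [h3, ← Finset.sum_mul, h2] at h1
  rw [Finset.card_univ] at h1
  exact ⟨(Finset.univ.filter fun e => Odd (c e)).card, by omega⟩

section Subdivide

variable [Fintype E] (G : Multigraph V E) (e : E) (x y : V)

lemma subdivide_degree_inl (v : V) (hxy : G.ends e = s(x, y)) (hne : x ≠ y) :
    (G.subdivide e x y).degree (Sum.inl v) = G.degree v := by
  classical
  unfold degree
  refine Finset.card_bij (fun g _ => match g with
    | Sum.inl f => f.1
    | Sum.inr _ => e) ?_ ?_ ?_
  · rintro (f | b) hg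
    · simp only [Finset.mem_filter, Finset.mem_univ, true_and] at hg ⊢
      have hg' : v ∈ G.ends f.1 := by
        simpa [Multigraph.subdivide, Sym2.mem_map] using hg
      exact hg'
    · simp only [Finset.mem_filter, Finset.mem_univ, true_and] at hg ⊢
      rw [hxy, Sym2.mem_iff]
      cases b
      · right
        simpa [Multigraph.subdivide, Sym2.mem_iff] using hg
      · left
        simpa [Multigraph.subdivide, Sym2.mem_iff] using hg
  · rintro (f1 | b1) h1 (f2 | b2) h2 hEq
    · exact congrArg Sum.inl (Subtype.ext hEq)
    · exact absurd hEq f1.2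
    · exact absurd hEq.symm f2.2
    · simp only [Finset.mem_filter, Finset.mem_univ, true_and] at h1 h2
      cases b1 <;> cases b2
      · rfl
      · exfalso
        have hv1 : v = y := by simpa [Multigraph.subdivide, Sym2.mem_iff] using h1
        have hv2 : v = x := by simpa [Multigraph.subdivide, Sym2.mem_iff] using h2
        exact hne (hv2.symm.trans hv1)
      · exfalso
        have hv1 : v = x := by simpa [Multigraph.subdivide, Sym2.mem_iff] using h1
        have hv2 : v = y := by simpa [Multigraph.subdivide, Sym2.mem_iff] using h2
        exact hne (hv1.symm.trans hv2)
      · rfl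
  · intro f hf
    simp only [Finset.mem_filter, Finset.mem_univ, true_and] at hf
    by_cases hfe : f = e
    · subst hfe
      rw [hxy, Sym2.mem_iff] at hf
      rcases hf with rfl | rfl
      · refine ⟨Sum.inr true, ?_, rfl⟩
        convert (Finset.mem_filter (s := Finset.univ) (a := Sum.inr true)
          (p := fun g => Sum.inl v ∈ (G.subdivide f v y).ends g)).mpr
          ⟨Finset.mem_univ _, (by simp [Multigraph.subdivide, Sym2.mem_iff] :
          Sum.inl v ∈ (G.subdivide f v y).ends (Sum.inr true))⟩
      · refine ⟨Sum.inr false, ?_, rfl⟩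
        convert (Finset.mem_filter (s := Finset.univ) (a := Sum.inr false)
          (p := fun g => Sum.inl v ∈ (G.subdivide f x v).ends g)).mpr
          ⟨Finset.mem_univ _, (by simp [Multigraph.subdivide, Sym2.mem_iff] :
          Sum.inl v ∈ (G.subdivide f x v).ends (Sum.inr false))⟩
    · refine ⟨Sum.inl ⟨f, hfe⟩, ?_, rfl⟩
      simp only [Finset.mem_filter, Finset.mem_univ, true_and]
      simpa [Multigraph.subdivide, Sym2.mem_map] using hf

lemma subdivide_degree_inr :
    (G.subdivide e x y).degree (Sum.inr ()) = 2 := by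
  classical
  unfold degree
  rw [Finset.card_eq_two]
  refine ⟨Sum.inr true, Sum.inr false, by simp, ?_⟩
  ext g
  simp only [Finset.mem_filter, Finset.mem_univ, true_and, Finset.mem_insert,
    Finset.mem_singleton]
  constructor
  · intro hg
    rcases g with (f | b)
    · exfalso
      simp [Multigraph.subdivide, Sym2.mem_map] at hg
    · cases b
      · right; rfl
      · left; rfl
  · rintro (rfl | rfl) <;> simp [Multigraph.subdivide, Sym2.mem_iff]

end Subdivide

end Multigraph

/-- if `G` is Eulerian and interval colorable, then subdividing any edge
yields a multigraph with no interval coloring. -/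
theorem stmt6 {V E : Type} [Fintype E] (G : Multigraph V E)
    (hconn : G.Connected) (heven : ∀ v : V, Even (G.degree v))
    (hcol : G.IntervalColorable) (e : E) (x y : V) (hxy : G.ends e = s(x, y)) :
    ¬ (G.subdivide e x y).IntervalColorable := by
  classical
  intro hcol'
  have hne : x ≠ y := by
    intro h
    apply G.not_isDiag e
    rw [hxy, h]
    exact Sym2.mk_isDiag_iff.mpr rfl
  have heven' : ∀ v : V ⊕ Unit, Even ((G.subdivide e x y).degree v) := by
    rintro (v | ⟨⟩)
    · rw [G.subdivide_degree_inl e x y v hxy hne]; exact heven v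
    · rw [G.subdivide_degree_inr e x y]; exact ⟨1, rfl⟩
  have h1 : Even (Fintype.card E) :=
    G.even_card_of_intervalColorable heven hcol
  have h2 : Even (Fintype.card ({f : E // f ≠ e} ⊕ Bool)) :=
    (G.subdivide e x y).even_card_of_intervalColorable heven' hcol'
  rw [Fintype.card_sum, Fintype.card_bool] at h2
  have h3 : Fintype.card {f : E // f ≠ e} = Fintype.card E - 1 := by
    rw [Fintype.card_subtype_compl (p := fun f => f = e)]
    simp [Fintype.card_subtype_eq]
  have h4 : 1 ≤ Fintype.card E := Fintype.card_pos_iff.mpr ⟨e⟩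
  rw [h3] at h2
  obtain ⟨m, hm⟩ := h1
  obtain ⟨n, hn⟩ := h2
  omega
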